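/- Every homogeneous block of the DTW table is a q-block for some value q: if P[i_p..j_p] is a run in P, T[i_t..j_t] is a run in T, and P[i_p] = T[i_t], then all cells D[a,b] with i_p ≤ a ≤ j_p and i_t ≤ b ≤ j_t have the same value. -/

import Mathlib

open scoped ENNReal

/-- every homogeneous block of the DTW table (formed by a run of `P` and
a run of `T` consisting of the same letter) is a `q`-block: all its cells carry the
same value. -/
theorem homogeneous_block_constant {α : Type*} (d : α → α → ℝ≥0∞) (P T : ℕ → α)
    (hrefl : ∀ a, d a a = 0) (hpos : ∀ a b, a ≠ b → 0 < d a b)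
    (D : ℕ → ℕ → ℝ≥0∞)
    (hD0 : ∀ j, D 0 j = 0) (hDi0 : ∀ i, 1 ≤ i → D i 0 = ⊤)
    (hrec : ∀ i j, 1 ≤ i → 1 ≤ j →
      D i j = min (min (D (i - 1) (j - 1)) (D (i - 1) j)) (D i (j - 1))
        + d (P i) (T j))
    (ip jp it jt : ℕ) (hip : 1 ≤ ip) (hit : 1 ≤ it)
    (hP : ∀ x, ip ≤ x → x ≤ jp → P x = P ip)
    (hT : ∀ y, it ≤ y → y ≤ jt → T y = T it)
    (hhom : P ip = T it) :
    ∀ a b a' b', ip ≤ a → a ≤ jp → it ≤ b → b ≤ jt →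
      ip ≤ a' → a' ≤ jp → it ≤ b' → b' ≤ jt → D a b = D a' b' := by
  -- the distance inside the block vanishes
  have hd0 : ∀ a b, ip ≤ a → a ≤ jp → it ≤ b → b ≤ jt → d (P a) (T b) = 0 := by
    intro a b h1 h2 h3 h4
    rw [hP a h1 h2, hT b h3 h4, hhom, hrefl]
  -- L1 : clamping columns, for T-run only
  have L1 : ∀ i, ∀ y, it ≤ y → y ≤ jt → D i it ≤ D i y := by
    intro i
    induction i with
    | zero => intro y _ _; rw [hD0, hD0]
    | succ i ih =>
      intro y hy
      induction y, hy using Nat.le_induction with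
      | base => intro _; exact le_rfl
      | succ y hy ihy =>
        intro hle
        have hyjt : y ≤ jt := le_trans (Nat.le_succ y) hle
        have hrecy : D (i+1) (y+1) = min (min (D i y) (D i (y+1))) (D (i+1) y)
            + d (P (i+1)) (T (y+1)) := by
          have := hrec (i+1) (y+1) (Nat.le_add_left 1 i) (Nat.le_add_left 1 y)
          simpa using this
        set c := d (P (i+1)) (T (y+1)) with hc
        have hcit : c = d (P (i+1)) (T it) := by
          rw [hc, hT (y+1) (le_trans hy (Nat.le_succ y)) hle]
        -- D (i+1) it ≤ D i it + c
        have hbase : D (i+1) it ≤ D i it + c := by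
          have := hrec (i+1) it (Nat.le_add_left 1 i) hit
          simp only [Nat.add_sub_cancel] at this
          rw [this, hcit]
          exact add_le_add_left (le_trans (min_le_left _ _) (min_le_right _ _)) _
        rw [hrecy]
        rw [← min_add_add_right, ← min_add_add_right]
        refine le_min (le_min ?_ ?_) ?_
        · exact le_trans hbase (add_le_add_left (ih y hy hyjt) c)
        · exact le_trans hbase (add_le_add_left (ih (y+1) (le_trans hy (Nat.le_succ y)) hle) c)
        · exact le_trans (ihy hyjt) (le_add_right le_rfl)
  -- L2 : clamping rows, for P-run only
  have L2 : ∀ j, ∀ x, ip ≤ x → x ≤ jp → D ip j ≤ D x j := by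
    intro j
    induction j with
    | zero =>
      intro x hx hx'
      rw [hDi0 x (le_trans hip hx)]
      exact le_top
    | succ j ih =>
      intro x hx
      induction x, hx using Nat.le_induction with
      | base => intro _; exact le_rfl
      | succ x hx ihx =>
        intro hle
        have hxjp : x ≤ jp := le_trans (Nat.le_succ x) hle
        have hrecx : D (x+1) (j+1) = min (min (D x j) (D x (j+1))) (D (x+1) j)
            + d (P (x+1)) (T (j+1)) := by
          have := hrec (x+1) (j+1) (Nat.le_add_left 1 x) (Nat.le_add_left 1 j)
          simpa using this
        set c := d (P (x+1)) (T (j+1)) with hc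
        have hcip : c = d (P ip) (T (j+1)) := by
          rw [hc, hP (x+1) (le_trans hx (Nat.le_succ x)) hle]
        -- D ip (j+1) ≤ D ip j + c
        have hbase : D ip (j+1) ≤ D ip j + c := by
          have := hrec ip (j+1) hip (Nat.le_add_left 1 j)
          simp only [Nat.add_sub_cancel] at this
          rw [this, hcip]
          exact add_le_add_left (min_le_right _ _) _
        rw [hrecx]
        rw [← min_add_add_right, ← min_add_add_right]
        refine le_min (le_min ?_ ?_) ?_
        · exact le_trans hbase (add_le_add_left (ih x hx hxjp) c)
        · exact le_trans (ihx hxjp) (le_add_right le_rfl)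
        · exact le_trans hbase (add_le_add_left (ih (x+1) (le_trans hx (Nat.le_succ x)) hle) c)
  -- in-block recurrence with zero distance
  have hstep : ∀ a b, ip ≤ a → a ≤ jp → it ≤ b → b ≤ jt →
      D a b = min (min (D (a-1) (b-1)) (D (a-1) b)) (D a (b-1)) := by
    intro a b h1 h2 h3 h4
    have := hrec a b (le_trans hip h1) (le_trans hit h3)
    rw [hd0 a b h1 h2 h3 h4, add_zero] at this
    exact this
  -- upper bound : D a b ≤ D ip it
  have M : ∀ a, ip ≤ a → a ≤ jp → ∀ b, it ≤ b → b ≤ jt → D a b ≤ D ip it := by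
    intro a ha
    induction a, ha using Nat.le_induction with
    | base =>
      intro _ b hb
      induction b, hb using Nat.le_induction with
      | base => intro _; exact le_rfl
      | succ b hb ihb =>
        intro hle
        have hbjt : b ≤ jt := le_trans (Nat.le_succ b) hle
        calc D ip (b+1) ≤ D ip b := by
              rw [hstep ip (b+1) le_rfl ‹ip ≤ jp› (le_trans hb (Nat.le_succ b)) hle]
              simpa using min_le_right _ _
          _ ≤ D ip it := ihb hbjt
    | succ a ha iha =>
      intro hle b hb hb'
      have hajp : a ≤ jp := le_trans (Nat.le_succ a) hle
      calc D (a+1) b ≤ D a b := by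
            rw [hstep (a+1) b (le_trans ha (Nat.le_succ a)) hle hb hb']
            have : min (min (D (a+1-1) (b-1)) (D (a+1-1) b)) (D (a+1) (b-1)) ≤ D (a+1-1) b :=
              le_trans (min_le_left _ _) (min_le_right _ _)
            simpa using this
        _ ≤ D ip it := iha hajp b hb hb'
  -- lower bound : D ip it ≤ D a b
  have N : ∀ a b, ip ≤ a → a ≤ jp → it ≤ b → b ≤ jt → D ip it ≤ D a b := by
    intro a b h1 h2 h3 h4
    exact le_trans (L2 it a h1 h2) (L1 a b h3 h4)
  intro a b a' b' h1 h2 h3 h4 h5 h6 h7 h8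
  have e1 : D a b = D ip it := le_antisymm (M a h1 h2 b h3 h4) (N a b h1 h2 h3 h4)
  have e2 : D a' b' = D ip it := le_antisymm (M a' h5 h6 b' h7 h8) (N a' b' h5 h6 h7 h8)
  rw [e1, e2]
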